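/- Let ρ be a convex metric on a convex set C and let f : C → ℝ be wa-differentiable in a ρ-neighborhood of a point x̄ ∈ C. If the map x ↦ Df(x;y) is ρ-continuous at x̄ for every y ∈ C, then f is strictly wa-differentiable at x̄: for every y ∈ C, every sequence t_n ↓ 0, and every sequence x_n ∈ C with ρ(x_n, x̄) → 0, (f((1−t_n)x_n + t_n y) − f(x_n))/t_n → Df(x̄; y). -/

import Mathlib

open Set Filter Topology

lemma aux_slope {X : Type*} [AddCommGroup X] [Module ℝ X]
    (f : X → ℝ) (z v : X) (d : ℝ)
    (hQ : Tendsto (fun τ : ℝ => (f ((1 - τ) • z + τ • v) - f z) / τ) (𝓝[>] (0:ℝ)) (𝓝 d))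
    (g : ℝ → X) (s c : ℝ) (hc : c ≠ 0)
    (hg : ∀ b : ℝ, g b = (1 - (b - s) / c) • z + ((b - s) / c) • v)
    (l : Filter ℝ) (hψ : Tendsto (fun b => (b - s) / c) l (𝓝[>] (0:ℝ))) :
    Tendsto (slope (fun b => f (g b)) s) l (𝓝 (d / c)) := by
  have hgs : g s = z := by rw [hg]; simp
  have hev : ∀ᶠ b in l, (b - s) / c ∈ Ioi (0:ℝ) := hψ (self_mem_nhdsWithin)
  have heq : (fun b => ((f ((1 - (b - s) / c) • z + ((b - s) / c) • v) - f z) / ((b - s) / c)) / c)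
      =ᶠ[l] slope (fun b => f (g b)) s := by
    filter_upwards [hev] with b hb
    have hbs : b - s ≠ 0 := by
      intro h; rw [h] at hb; simp at hb
    rw [slope_def_field, hg b, hgs]
    field_simp
  exact Tendsto.congr' heq ((hQ.comp hψ).div_const c)

lemma aux_psi {s c : ℝ} (hc : 0 < c) :
    Tendsto (fun b => (b - s) / c) (𝓝[>] s) (𝓝[>] (0:ℝ)) := by
  rw [tendsto_nhdsWithin_iff]
  constructor
  · have : Tendsto (fun b : ℝ => (b - s) / c) (𝓝 s) (𝓝 ((s - s) / c)) :=
      ((continuous_id.sub continuous_const).div_const c).tendsto s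
    simpa using this.mono_left nhdsWithin_le_nhds
  · exact eventually_nhdsWithin_of_forall fun b hb => div_pos (sub_pos.2 hb) hc

lemma aux_psi' {s c : ℝ} (hc : c < 0) :
    Tendsto (fun b => (b - s) / c) (𝓝[<] s) (𝓝[>] (0:ℝ)) := by
  rw [tendsto_nhdsWithin_iff]
  constructor
  · have : Tendsto (fun b : ℝ => (b - s) / c) (𝓝 s) (𝓝 ((s - s) / c)) :=
      ((continuous_id.sub continuous_const).div_const c).tendsto s
    simpa using this.mono_left nhdsWithin_le_nhds
  · exact eventually_nhdsWithin_of_forall fun b hb =>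
      div_pos_of_neg_of_neg (sub_neg.2 hb) hc

lemma aux_id_right {X : Type*} [AddCommGroup X] [Module ℝ X] (xn y : X) (b s : ℝ)
    (hs : (1:ℝ) - s ≠ 0) :
    (1 - b) • xn + b • y
      = (1 - (b - s)/(1 - s)) • ((1 - s) • xn + s • y) + ((b - s)/(1 - s)) • y := by
  have key : ∀ τ : ℝ, (1 - τ) • ((1 - s) • xn + s • y) + τ • y
      = ((1 - τ) * (1 - s)) • xn + (1 - (1 - τ) * (1 - s)) • y := by
    intro τ; match_scalars <;> ring
  rw [key]
  have e : (1 - (b - s)/(1 - s)) * (1 - s) = 1 - b := by field_simp; ring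
  rw [e]
  simp

lemma aux_id_left {X : Type*} [AddCommGroup X] [Module ℝ X] (xn y : X) (b s : ℝ)
    (hs : s ≠ 0) :
    (1 - b) • xn + b • y
      = (1 - (b - s)/(-s)) • ((1 - s) • xn + s • y) + ((b - s)/(-s)) • xn := by
  have key : ∀ τ : ℝ, (1 - τ) • ((1 - s) • xn + s • y) + τ • xn
      = (1 - (1 - τ) * s) • xn + ((1 - τ) * s) • y := by
    intro τ; match_scalars <;> ring
  rw [key]
  have e : (1 - (b - s)/(-s)) * s = b := by rw [div_neg]; field_simp; ring
  rw [e]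

set_option maxHeartbeats 1000000 in
/-- if `ρ` is a convex metric on `C`, `f` is wa-differentiable in a
`ρ`-neighborhood of `x̄ ∈ C`, and `x ↦ Df(x;y)` is `ρ`-continuous at `x̄` for every
`y ∈ C`, then `f` is strictly wa-differentiable at `x̄`. -/
theorem stmt_17 {X : Type*} [AddCommGroup X] [Module ℝ X]
    (C : Set X) (hC : Convex ℝ C) (ρ : X → X → ℝ)
    (hρ0 : ∀ x ∈ C, ρ x x = 0)
    (hρeq : ∀ x ∈ C, ∀ y ∈ C, ρ x y = 0 → x = y)
    (hρsymm : ∀ x ∈ C, ∀ y ∈ C, ρ x y = ρ y x)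
    (hρtri : ∀ x ∈ C, ∀ y ∈ C, ∀ z ∈ C, ρ x z ≤ ρ x y + ρ y z)
    (hρconv : ∀ x ∈ C, ∀ y₁ ∈ C, ∀ y₂ ∈ C, ∀ α ∈ Set.Icc (0:ℝ) 1,
      ρ x (α • y₁ + (1 - α) • y₂) ≤ α * ρ x y₁ + (1 - α) * ρ x y₂)
    (f : X → ℝ) (D : X → X → ℝ) (xbar : X) (hxbar : xbar ∈ C)
    (ε : ℝ) (hε : 0 < ε)
    -- `f` is wa-differentiable on a `ρ`-neighborhood of `x̄`:
    (hwa : ∀ z ∈ C, ρ z xbar ≤ ε →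
      (∀ y ∈ C,
        Tendsto (fun t : ℝ => (f ((1 - t) • z + t • y) - f z) / t)
          (𝓝[>] 0) (𝓝 (D z y))) ∧
      (∀ y ∈ C, ∀ w ∈ C, ∀ t ∈ Set.Icc (0:ℝ) 1,
        D z ((1 - t) • y + t • w) = (1 - t) * D z y + t * D z w))
    -- `x ↦ Df(x;y)` is `ρ`-continuous at `x̄` for every `y ∈ C`:
    (hcont : ∀ y ∈ C, ∀ z : ℕ → X, (∀ n, z n ∈ C) →
      Tendsto (fun n => ρ (z n) xbar) atTop (𝓝 0) →
      Tendsto (fun n => D (z n) y) atTop (𝓝 (D xbar y))) :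
    -- strict wa-differentiability at `x̄`:
    ∀ y ∈ C, ∀ t : ℕ → ℝ, ∀ x : ℕ → X,
      (∀ n, 0 < t n ∧ t n ≤ 1) → Tendsto t atTop (𝓝 0) →
      (∀ n, x n ∈ C) → Tendsto (fun n => ρ (x n) xbar) atTop (𝓝 0) →
      Tendsto (fun n => (f ((1 - t n) • x n + t n • y) - f (x n)) / t n)
        atTop (𝓝 (D xbar y)) := by
  have hρnn : ∀ a ∈ C, ∀ b ∈ C, 0 ≤ ρ a b := by
    intro a ha b hb
    have h1 := hρtri a ha b hb a ha
    rw [hρ0 a ha, hρsymm b hb a ha] at h1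
    linarith
  intro y hy t x ht htt hxC hxρ
  set c := D xbar y with hcdef
  -- Step 1: ε-δ continuity of D · y at xbar
  have hδclaim : ∀ η : ℝ, 0 < η → ∃ δ > 0, ∀ z ∈ C, ρ z xbar ≤ δ → |D z y - c| ≤ η := by
    intro η hη
    by_contra hcon
    push_neg at hcon
    have hcon' : ∀ δ : ℝ, 0 < δ → ∃ z, z ∈ C ∧ ρ z xbar ≤ δ ∧ η < |D z y - c| := by
      intro δ hδ
      obtain ⟨z, hz1, hz2, hz3⟩ := hcon δ hδ
      exact ⟨z, hz1, hz2, hz3⟩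
    choose! z hz1 hz2 hz3 using hcon'
    set w : ℕ → X := fun n => z (1 / (n + 1))
    have hpos : ∀ n : ℕ, (0:ℝ) < 1 / (n + 1) := fun n => by positivity
    have hwC : ∀ n, w n ∈ C := fun n => hz1 _ (hpos n)
    have hwρ : Tendsto (fun n => ρ (w n) xbar) atTop (𝓝 0) := by
      have hub : ∀ n : ℕ, ρ (w n) xbar ≤ 1 / (n + 1) := fun n => hz2 _ (hpos n)
      have hlb : ∀ n : ℕ, 0 ≤ ρ (w n) xbar := fun n => hρnn _ (hwC n) _ hxbar
      exact squeeze_zero hlb hub tendsto_one_div_add_atTop_nhds_zero_nat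
    have := hcont y hy w hwC hwρ
    rw [Metric.tendsto_atTop] at this
    obtain ⟨N, hN⟩ := this η hη
    have := hN N le_rfl
    rw [Real.dist_eq] at this
    exact absurd this (not_lt.2 (le_of_lt (hz3 _ (hpos N))))
  -- main
  rw [Metric.tendsto_atTop]
  intro η hη
  set η' : ℝ := η / 4 with hη'def
  have hη' : 0 < η' := by positivity
  obtain ⟨δ, hδpos, hδ⟩ := hδclaim η' hη'
  set B : ℝ := ρ xbar y with hBdef
  have hB : 0 ≤ B := hρnn _ hxbar _ hy
  set Tm : ℝ := min (1/2) (min (η' / (2 * (|c| + 1))) (min (δ / (2 * (B + 1))) (ε / (2 * (B + 1))))) with hTm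
  have hTmpos : 0 < Tm := by
    have : (0:ℝ) < |c| + 1 := by positivity
    have : (0:ℝ) < B + 1 := by positivity
    refine lt_min (by norm_num) (lt_min (by positivity) (lt_min (by positivity) (by positivity)))
  have hev1 : ∀ᶠ n in atTop, ρ (x n) xbar < min (δ/2) (ε/2) :=
    hxρ.eventually_lt_const (lt_min (by positivity) (by positivity))
  have hev2 : ∀ᶠ n in atTop, t n < Tm := htt.eventually_lt_const hTmpos
  obtain ⟨N, hN⟩ := (hev1.and hev2).exists_forall_of_atTop
  refine ⟨N, fun n hn => ?_⟩
  obtain ⟨hρn, htn⟩ := hN n hn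
  obtain ⟨htpos, _⟩ := ht n
  set T : ℝ := t n with hTdef
  have hT2 : T ≤ 1/2 := le_trans htn.le (min_le_left _ _)
  have hTc : T * (2 * (|c| + 1)) ≤ η' := by
    have h1 : T ≤ η' / (2 * (|c| + 1)) :=
      le_trans htn.le (le_trans (min_le_right _ _) (min_le_left _ _))
    have h2 : (0:ℝ) < 2 * (|c| + 1) := by positivity
    calc T * (2 * (|c| + 1)) ≤ (η' / (2 * (|c| + 1))) * (2 * (|c| + 1)) := by
          exact mul_le_mul_of_nonneg_right h1 h2.le
      _ = η' := by field_simp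
  have hTδ : T * (B + 1) ≤ δ / 2 := by
    have h1 : T ≤ δ / (2 * (B + 1)) :=
      le_trans htn.le (le_trans (min_le_right _ _) (le_trans (min_le_right _ _) (min_le_left _ _)))
    have h2 : (0:ℝ) < B + 1 := by positivity
    calc T * (B + 1) ≤ (δ / (2 * (B + 1))) * (B + 1) := mul_le_mul_of_nonneg_right h1 h2.le
      _ = δ / 2 := by field_simp
  have hTε : T * (B + 1) ≤ ε / 2 := by
    have h1 : T ≤ ε / (2 * (B + 1)) :=
      le_trans htn.le (le_trans (min_le_right _ _) (le_trans (min_le_right _ _) (min_le_right _ _)))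
    have h2 : (0:ℝ) < B + 1 := by positivity
    calc T * (B + 1) ≤ (ε / (2 * (B + 1))) * (B + 1) := mul_le_mul_of_nonneg_right h1 h2.le
      _ = ε / 2 := by field_simp
  set g : ℝ → X := fun b => (1 - b) • x n + b • y with hgdef
  -- membership and nearness along the segment
  have hgC : ∀ s ∈ Icc (0:ℝ) T, g s ∈ C := by
    intro s hs
    have hs1 : s ≤ 1 := le_trans hs.2 (le_trans hT2 (by norm_num))
    exact hC (hxC n) hy (by linarith [hs.1]) hs.1 (by ring)
  have hgnear : ∀ s ∈ Icc (0:ℝ) T, ρ (g s) xbar ≤ δ ∧ ρ (g s) xbar ≤ ε := by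
    intro s hs
    have hs1 : s ≤ 1 := le_trans hs.2 (le_trans hT2 (by norm_num))
    have h1 := hρconv xbar hxbar (x n) (hxC n) y hy (1 - s) ⟨by linarith [hs.1], by linarith [hs.1]⟩
    have h2 : (1 : ℝ) - (1 - s) = s := by ring
    rw [h2] at h1
    have hsymm : ρ (g s) xbar = ρ xbar (g s) := hρsymm _ (hgC s hs) _ hxbar
    have hxn : ρ xbar (x n) = ρ (x n) xbar := hρsymm _ hxbar _ (hxC n)
    rw [hxn] at h1
    have hbd : ρ xbar (g s) ≤ ρ (x n) xbar + s * B := by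
      have hnn := hρnn _ (hxC n) _ hxbar
      nlinarith [hs.1, hs.2]
    have hsB : s * B ≤ T * (B + 1) := by nlinarith [hs.1, hs.2]
    constructor
    · rw [hsymm]; have := min_le_left (δ/2) (ε/2); linarith [hρn.trans_le (min_le_left (δ/2) (ε/2)), hTδ]
    · rw [hsymm]; linarith [hρn.trans_le (min_le_right (δ/2) (ε/2)), hTε]
  -- the auxiliary function
  set h : ℝ → ℝ := fun b => f (g b) - b * c with hhdef
  -- right derivative of h on [0, T)
  have hright : ∀ s ∈ Icc (0:ℝ) T,
      HasDerivWithinAt h (D (g s) y / (1 - s) - c) (Ici s) s := by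
    intro s hs
    have hs1 : s ≤ 1/2 := le_trans hs.2 hT2
    have h1s : (0:ℝ) < 1 - s := by linarith
    have hQ := (hwa (g s) (hgC s hs) (hgnear s hs).2).1 y hy
    have hF : HasDerivWithinAt (fun b => f (g b)) (D (g s) y / (1 - s)) (Ici s) s := by
      rw [hasDerivWithinAt_iff_tendsto_slope, Ici_sdiff_left]
      exact aux_slope f (g s) y _ hQ g s (1 - s) h1s.ne'
        (fun b => aux_id_right (x n) y b s h1s.ne')
        _ (aux_psi h1s)
    have hh := hF.sub ((hasDerivWithinAt_id s (Ici s)).mul_const c)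
    simp only [id, one_mul] at hh
    exact hh
  -- left derivative (continuity) of h on (0, T]
  have hleft : ∀ s ∈ Icc (0:ℝ) T, 0 < s →
      HasDerivWithinAt h (D (g s) (x n) / (-s) - c) (Iic s) s := by
    intro s hs hspos
    have hsne : s ≠ 0 := ne_of_gt hspos
    have hQ := (hwa (g s) (hgC s hs) (hgnear s hs).2).1 (x n) (hxC n)
    have hF : HasDerivWithinAt (fun b => f (g b)) (D (g s) (x n) / (-s)) (Iic s) s := by
      rw [hasDerivWithinAt_iff_tendsto_slope, Iic_diff_right]
      exact aux_slope f (g s) (x n) _ hQ g s (-s) (by simpa using hsne)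
        (fun b => aux_id_left (x n) y b s hsne)
        _ (aux_psi' (by simpa using hspos))
    have hh := hF.sub ((hasDerivWithinAt_id s (Iic s)).mul_const c)
    simp only [id, one_mul] at hh
    exact hh
  -- continuity of h on [0, T]
  have hcontOn : ContinuousOn h (Icc 0 T) := by
    intro s hs
    rcases eq_or_lt_of_le hs.1 with h0 | h0
    · exact ((hright s hs).continuousWithinAt).mono (by rw [← h0]; exact Icc_subset_Ici_self)
    · have hl := (hleft s hs h0).continuousWithinAt
      have hr := (hright s hs).continuousWithinAt
      exact (hl.union hr).mono (fun b _ => by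
        rcases le_total b s with hb | hb
        · exact Or.inl hb
        · exact Or.inr hb)
  -- bound on the right derivative
  have hbound : ∀ s ∈ Ico (0:ℝ) T, ‖D (g s) y / (1 - s) - c‖ ≤ 3 * η' := by
    intro s hs
    have hsIcc : s ∈ Icc (0:ℝ) T := ⟨hs.1, hs.2.le⟩
    have hs1 : s ≤ 1/2 := le_trans hsIcc.2 hT2
    have h1s : (0:ℝ) < 1 - s := by linarith
    have hd : |D (g s) y - c| ≤ η' := hδ (g s) (hgC s hsIcc) (hgnear s hsIcc).1
    set d := D (g s) y with hddef
    have e1 : d / (1 - s) - c = (d - c + c * s) / (1 - s) := by field_simp; ring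
    rw [Real.norm_eq_abs, e1, abs_div, abs_of_pos h1s, div_le_iff₀ h1s]
    have h2 : |d - c + c * s| ≤ |d - c| + |c| * s := by
      calc |d - c + c * s| ≤ |d - c| + |c * s| := abs_add_le _ _
        _ = |d - c| + |c| * s := by rw [abs_mul, abs_of_nonneg hs.1]
    have hsT : s ≤ T := hsIcc.2
    have habs : (0:ℝ) ≤ |c| := abs_nonneg c
    nlinarith [hs.1]
  -- mean value inequality
  have hmv := norm_image_sub_le_of_norm_deriv_right_le_segment hcontOn
    (fun s hs => hright s ⟨hs.1, hs.2.le⟩) hbound T ⟨htpos.le, le_rfl⟩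
  have h0 : h 0 = f (x n) := by simp [hhdef, hgdef]
  have key : |f ((1 - T) • x n + T • y) - f (x n) - T * c| ≤ 3 * η' * T := by
    simpa [h0, hhdef, hgdef, Real.norm_eq_abs, sub_right_comm] using hmv
  have e2 : (f ((1 - T) • x n + T • y) - f (x n)) / T - c
      = (f ((1 - T) • x n + T • y) - f (x n) - T * c) / T := by
    field_simp
  rw [Real.dist_eq]
  show |(f ((1 - t n) • x n + t n • y) - f (x n)) / t n - c| < η
  rw [← hTdef, e2, abs_div, abs_of_pos htpos, div_lt_iff₀ htpos]
  nlinarith [key, htpos, hη]
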